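/- Let X be a metric space, let μ₀ be a Borel probability measure on X with an Onsager–Machlup functional I₀ : E → ℝ on E ⊆ supp(μ₀), and let Φ : X → ℝ be locally uniformly continuous. Suppose Z := ∫_X exp(−Φ(x)) dμ₀(x) ∈ (0, ∞) and define the Borel probability measure μ by μ(A) = Z⁻¹ ∫_A exp(−Φ(x)) dμ₀(x). Then I := Φ|_E + I₀ is an Onsager–Machlup functional for μ on E; that is, for all u, v ∈ E, lim_{r→0} μ(B(u,r))/μ(B(v,r)) = exp((Φ(v) + I₀(v)) − (Φ(u) + I₀(u))). -/

import Mathlib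

open MeasureTheory Metric Filter Set Topology ENNReal

noncomputable section

/-- The topological support of a Borel measure on a metric space: the set of points all of
whose open balls have positive measure. -/
def measureSupport {X : Type*} [PseudoMetricSpace X] [MeasurableSpace X]
    (μ : Measure X) : Set X :=
  {x | ∀ r > 0, 0 < μ (Metric.ball x r)}

/-- `I` is an Onsager--Machlup functional for `μ` on `E`: for all `x₁ x₂ ∈ E`, the ratio of
small-ball probabilities tends to `exp (I x₂ - I x₁)` as the radius tends to `0⁺`. -/
def IsOMFunctional {X : Type*} [PseudoMetricSpace X] [MeasurableSpace X]
    (μ : Measure X) (E : Set X) (I : X → ℝ) : Prop :=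
  ∀ x₁ ∈ E, ∀ x₂ ∈ E,
    Filter.Tendsto (fun r : ℝ => μ (Metric.ball x₁ r) / μ (Metric.ball x₂ r))
      (𝓝[>] 0) (𝓝 (ENNReal.ofReal (Real.exp (I x₂ - I x₁))))

/-- Property `M(μ, E)`: there is `x⋆ ∈ E` such that for every `x ∉ E` the small-ball
probability ratio `μ(B(x,r)) / μ(B(x⋆,r))` tends to `0` as `r → 0⁺`. -/
def PropertyM {X : Type*} [PseudoMetricSpace X] [MeasurableSpace X]
    (μ : Measure X) (E : Set X) : Prop :=
  ∃ xs ∈ E, ∀ x ∉ E,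
    Filter.Tendsto (fun r : ℝ => μ (Metric.ball x r) / μ (Metric.ball xs r)) (𝓝[>] 0) (𝓝 0)

/-- `f` is locally uniformly continuous: near every `x` there is an increasing local modulus
of continuity `ω : [0,∞) → [0,∞]` with `ω(r) → 0` as `r → 0` and
`dist (f x′) (f x) ≤ ω (dist x′ x)` for all `x′`. -/
def LocallyUniformlyContinuous {X Y : Type*} [PseudoMetricSpace X] [PseudoMetricSpace Y]
    (f : X → Y) : Prop :=
  ∀ x : X, ∃ ω : ℝ → ℝ≥0∞,
    (∀ r s : ℝ, 0 ≤ r → r ≤ s → ω r ≤ ω s) ∧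
    Filter.Tendsto ω (𝓝[≥] 0) (𝓝 0) ∧
    ∀ x' : X, ENNReal.ofReal (dist (f x') (f x)) ≤ ω (dist x' x)

theorem OM_functional_of_reweighted_measure
    {X : Type*} [MetricSpace X] [MeasurableSpace X] [BorelSpace X]
    (μ₀ : Measure X) [IsProbabilityMeasure μ₀]
    (E : Set X) (hEsupp : E ⊆ measureSupport μ₀)
    (I₀ : X → ℝ) (hI₀ : IsOMFunctional μ₀ E I₀)
    (Φ : X → ℝ) (hΦ : LocallyUniformlyContinuous Φ)
    (Z : ℝ≥0∞) (hZ : Z = ∫⁻ x, ENNReal.ofReal (Real.exp (-Φ x)) ∂μ₀)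
    (hZ0 : 0 < Z) (hZtop : Z < ⊤)
    (μ : Measure X)
    (hμ : μ = Z⁻¹ • μ₀.withDensity (fun x => ENNReal.ofReal (Real.exp (-Φ x))))
    [IsProbabilityMeasure μ] :
    IsOMFunctional μ E (fun x => Φ x + I₀ x) := by

  intro u hu v hv
  obtain ⟨ωu, hωu_mono, hωu_lim, hωu_bd⟩ := hΦ u
  obtain ⟨ωv, hωv_mono, hωv_lim, hωv_bd⟩ := hΦ v
  set f : X → ℝ≥0∞ := fun x => ENNReal.ofReal (Real.exp (-Φ x)) with hf
  have hZinv0 : Z⁻¹ ≠ 0 := by simp [hZtop.ne]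
  have hZinvtop : Z⁻¹ ≠ ⊤ := by simp [hZ0.ne']
  have hμball : ∀ (x : X) (r : ℝ),
      μ (Metric.ball x r) = Z⁻¹ * ∫⁻ y in Metric.ball x r, f y ∂μ₀ := by
    intro x r
    rw [hμ, Measure.smul_apply, smul_eq_mul, withDensity_apply _ measurableSet_ball]
  have hratio : ∀ r : ℝ, μ (Metric.ball u r) / μ (Metric.ball v r)
      = (∫⁻ y in Metric.ball u r, f y ∂μ₀) / (∫⁻ y in Metric.ball v r, f y ∂μ₀) := by
    intro r
    rw [hμball, hμball, ENNReal.mul_div_mul_left _ _ hZinv0 hZinvtop]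
  -- key bounds
  have key : ∀ (x : X) (ω : ℝ → ℝ≥0∞),
      (∀ r s : ℝ, 0 ≤ r → r ≤ s → ω r ≤ ω s) →
      (∀ x' : X, ENNReal.ofReal (dist (Φ x') (Φ x)) ≤ ω (dist x' x)) →
      ∀ r : ℝ, ω r ≠ ⊤ →
      ENNReal.ofReal (Real.exp (-Φ x - (ω r).toReal)) * μ₀ (Metric.ball x r)
        ≤ (∫⁻ y in Metric.ball x r, f y ∂μ₀) ∧
      (∫⁻ y in Metric.ball x r, f y ∂μ₀)
        ≤ ENNReal.ofReal (Real.exp (-Φ x + (ω r).toReal)) * μ₀ (Metric.ball x r) := by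
    intro x ω hmono hbd r hfin
    have hpt : ∀ y ∈ Metric.ball x r,
        -Φ x - (ω r).toReal ≤ -Φ y ∧ -Φ y ≤ -Φ x + (ω r).toReal := by
      intro y hy
      have hd : dist y x < r := Metric.mem_ball.mp hy
      have h1 : ENNReal.ofReal (dist (Φ y) (Φ x)) ≤ ω r :=
        (hbd y).trans (hmono _ _ dist_nonneg hd.le)
      have h2 : dist (Φ y) (Φ x) ≤ (ω r).toReal :=
        (ENNReal.ofReal_le_iff_le_toReal hfin).mp h1
      rw [Real.dist_eq, abs_sub_le_iff] at h2
      constructor <;> linarith [h2.1, h2.2]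
    constructor
    · calc ENNReal.ofReal (Real.exp (-Φ x - (ω r).toReal)) * μ₀ (Metric.ball x r)
          = ∫⁻ _ in Metric.ball x r, ENNReal.ofReal (Real.exp (-Φ x - (ω r).toReal)) ∂μ₀ := by
            rw [setLIntegral_const]
        _ ≤ ∫⁻ y in Metric.ball x r, f y ∂μ₀ := by
            refine lintegral_mono_ae ((ae_restrict_iff' measurableSet_ball).2
              (ae_of_all _ fun y hy => ?_))
            exact ENNReal.ofReal_le_ofReal (Real.exp_le_exp.mpr (hpt y hy).1)
    · calc (∫⁻ y in Metric.ball x r, f y ∂μ₀)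
          ≤ ∫⁻ _ in Metric.ball x r, ENNReal.ofReal (Real.exp (-Φ x + (ω r).toReal)) ∂μ₀ := by
            refine lintegral_mono_ae ((ae_restrict_iff' measurableSet_ball).2
              (ae_of_all _ fun y hy => ?_))
            exact ENNReal.ofReal_le_ofReal (Real.exp_le_exp.mpr (hpt y hy).2)
        _ = ENNReal.ofReal (Real.exp (-Φ x + (ω r).toReal)) * μ₀ (Metric.ball x r) := by
            rw [setLIntegral_const]
  -- moduli tend to 0 along 𝓝[>] 0, and their toReal
  have hωu_lim' : Filter.Tendsto ωu (𝓝[>] (0:ℝ)) (𝓝 0) :=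
    hωu_lim.mono_left (nhdsWithin_mono 0 Set.Ioi_subset_Ici_self)
  have hωv_lim' : Filter.Tendsto ωv (𝓝[>] (0:ℝ)) (𝓝 0) :=
    hωv_lim.mono_left (nhdsWithin_mono 0 Set.Ioi_subset_Ici_self)
  have htu : Filter.Tendsto (fun r => (ωu r).toReal) (𝓝[>] (0:ℝ)) (𝓝 0) := by
    have := (ENNReal.tendsto_toReal (by simp : (0:ℝ≥0∞) ≠ ⊤)).comp hωu_lim'
    simpa [Function.comp_def] using this
  have htv : Filter.Tendsto (fun r => (ωv r).toReal) (𝓝[>] (0:ℝ)) (𝓝 0) := by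
    have := (ENNReal.tendsto_toReal (by simp : (0:ℝ≥0∞) ≠ ⊤)).comp hωv_lim'
    simpa [Function.comp_def] using this
  have hfinu : ∀ᶠ r in 𝓝[>] (0:ℝ), ωu r ≠ ⊤ :=
    (hωu_lim'.eventually (gt_mem_nhds (by norm_num : (0:ℝ≥0∞) < 1))).mono
      fun r hr => (hr.trans_le le_top).ne
  have hfinv : ∀ᶠ r in 𝓝[>] (0:ℝ), ωv r ≠ ⊤ :=
    (hωv_lim'.eventually (gt_mem_nhds (by norm_num : (0:ℝ≥0∞) < 1))).mono
      fun r hr => (hr.trans_le le_top).ne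
  -- upper and lower comparison functions
  set B : X → ℝ → ℝ≥0∞ := fun x r => μ₀ (Metric.ball x r) with hB
  set U : ℝ → ℝ≥0∞ := fun r =>
    ENNReal.ofReal (Real.exp ((Φ v - Φ u) + ((ωu r).toReal + (ωv r).toReal))) * (B u r / B v r)
    with hU
  set Lo : ℝ → ℝ≥0∞ := fun r =>
    ENNReal.ofReal (Real.exp ((Φ v - Φ u) - ((ωu r).toReal + (ωv r).toReal))) * (B u r / B v r)
    with hLo
  have hquot : ∀ (a b : ℝ) (c d : ℝ≥0∞),
      (ENNReal.ofReal (Real.exp a) * c) / (ENNReal.ofReal (Real.exp b) * d)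
        = ENNReal.ofReal (Real.exp (a - b)) * (c / d) := by
    intro a b c d
    have hb0 : ENNReal.ofReal (Real.exp b) ≠ 0 := by
      exact (ENNReal.ofReal_pos.mpr (Real.exp_pos _)).ne'
    rw [div_eq_mul_inv, ENNReal.mul_inv (Or.inl hb0) (Or.inl ENNReal.ofReal_ne_top),
      mul_mul_mul_comm, ← div_eq_mul_inv, ← div_eq_mul_inv,
      ← ENNReal.ofReal_div_of_pos (Real.exp_pos _), ← Real.exp_sub]
  have hUb : ∀ᶠ r in 𝓝[>] (0:ℝ),
      μ (Metric.ball u r) / μ (Metric.ball v r) ≤ U r := by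
    filter_upwards [hfinu, hfinv] with r hru hrv
    rw [hratio r]
    calc (∫⁻ y in Metric.ball u r, f y ∂μ₀) / (∫⁻ y in Metric.ball v r, f y ∂μ₀)
        ≤ (ENNReal.ofReal (Real.exp (-Φ u + (ωu r).toReal)) * B u r)
            / (ENNReal.ofReal (Real.exp (-Φ v - (ωv r).toReal)) * B v r) :=
          ENNReal.div_le_div (key u ωu hωu_mono hωu_bd r hru).2
            (key v ωv hωv_mono hωv_bd r hrv).1
      _ = U r := by
          rw [hquot]
          have he : (-Φ u + (ωu r).toReal) - (-Φ v - (ωv r).toReal)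
              = (Φ v - Φ u) + ((ωu r).toReal + (ωv r).toReal) := by ring
          rw [he]
  have hLb : ∀ᶠ r in 𝓝[>] (0:ℝ),
      Lo r ≤ μ (Metric.ball u r) / μ (Metric.ball v r) := by
    filter_upwards [hfinu, hfinv] with r hru hrv
    rw [hratio r]
    calc Lo r
        = (ENNReal.ofReal (Real.exp (-Φ u - (ωu r).toReal)) * B u r)
            / (ENNReal.ofReal (Real.exp (-Φ v + (ωv r).toReal)) * B v r) := by
          rw [hquot]
          have he : (-Φ u - (ωu r).toReal) - (-Φ v + (ωv r).toReal)
              = (Φ v - Φ u) - ((ωu r).toReal + (ωv r).toReal) := by ring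
          rw [he]
      _ ≤ (∫⁻ y in Metric.ball u r, f y ∂μ₀) / (∫⁻ y in Metric.ball v r, f y ∂μ₀) :=
          ENNReal.div_le_div (key u ωu hωu_mono hωu_bd r hru).1
            (key v ωv hωv_mono hωv_bd r hrv).2
  -- limits of the comparison functions
  have hBlim : Filter.Tendsto (fun r => B u r / B v r) (𝓝[>] (0:ℝ))
      (𝓝 (ENNReal.ofReal (Real.exp (I₀ v - I₀ u)))) := hI₀ u hu v hv
  have target_eq : ENNReal.ofReal (Real.exp (Φ v - Φ u)) * ENNReal.ofReal (Real.exp (I₀ v - I₀ u))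
      = ENNReal.ofReal (Real.exp ((Φ v + I₀ v) - (Φ u + I₀ u))) := by
    rw [← ENNReal.ofReal_mul (Real.exp_pos _).le, ← Real.exp_add]
    congr 2
    ring
  have hexp_ne0 : ENNReal.ofReal (Real.exp (Φ v - Φ u)) ≠ 0 := by
    exact (ENNReal.ofReal_pos.mpr (Real.exp_pos _)).ne'
  have hUexp : Filter.Tendsto
      (fun r => ENNReal.ofReal (Real.exp ((Φ v - Φ u) + ((ωu r).toReal + (ωv r).toReal))))
      (𝓝[>] (0:ℝ)) (𝓝 (ENNReal.ofReal (Real.exp (Φ v - Φ u)))) := by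
    have h1 : Filter.Tendsto (fun r => (Φ v - Φ u) + ((ωu r).toReal + (ωv r).toReal))
        (𝓝[>] (0:ℝ)) (𝓝 (Φ v - Φ u)) := by
      simpa using Filter.Tendsto.const_add (Φ v - Φ u) (htu.add htv)
    exact ((ENNReal.continuous_ofReal.comp Real.continuous_exp).tendsto _).comp h1
  have hLoexp : Filter.Tendsto
      (fun r => ENNReal.ofReal (Real.exp ((Φ v - Φ u) - ((ωu r).toReal + (ωv r).toReal))))
      (𝓝[>] (0:ℝ)) (𝓝 (ENNReal.ofReal (Real.exp (Φ v - Φ u)))) := by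
    have h1 : Filter.Tendsto (fun r => (Φ v - Φ u) - ((ωu r).toReal + (ωv r).toReal))
        (𝓝[>] (0:ℝ)) (𝓝 (Φ v - Φ u)) := by
      simpa using Filter.Tendsto.const_sub (Φ v - Φ u) (htu.add htv)
    exact ((ENNReal.continuous_ofReal.comp Real.continuous_exp).tendsto _).comp h1
  have hUlim : Filter.Tendsto U (𝓝[>] (0:ℝ))
      (𝓝 (ENNReal.ofReal (Real.exp ((Φ v + I₀ v) - (Φ u + I₀ u))))) := by
    rw [← target_eq]
    exact ENNReal.Tendsto.mul hUexp (Or.inl hexp_ne0) hBlim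
      (Or.inl (ENNReal.ofReal_pos.mpr (Real.exp_pos _)).ne')
  have hLolim : Filter.Tendsto Lo (𝓝[>] (0:ℝ))
      (𝓝 (ENNReal.ofReal (Real.exp ((Φ v + I₀ v) - (Φ u + I₀ u))))) := by
    rw [← target_eq]
    exact ENNReal.Tendsto.mul hLoexp (Or.inl hexp_ne0) hBlim
      (Or.inl (ENNReal.ofReal_pos.mpr (Real.exp_pos _)).ne')
  exact tendsto_of_tendsto_of_tendsto_of_le_of_le' hLolim hUlim hLb hUb
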